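/- arXiv:2408.12556 — 3 statements merged into one kernel-verified Lean document; each statement's English description precedes it below -/
import Mathlib

section
/- Let (B, |·|) be a Banach space, B₀ ⊆ B a dense subspace that is itself Banach with norm |·|₀ satisfying |x| ≤ C|x|₀ for all x ∈ B₀. Let A : B → B be a compact bounded linear operator with A(B₀) ⊆ B₀ such that A₀ := A|_{B₀} is compact and bounded on (B₀, |·|₀). Then the spectral radius of A on B equals the spectral radius of A₀ on B₀. -/
open Filter Topology Metric
open scoped ENNReal NNReal

lemma norm_algebraMap_clm_le {E : Type*} [NormedAddCommGroup E] [NormedSpace ℂ E] (c : ℂ) :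
    ‖algebraMap ℂ (E →L[ℂ] E) c‖ ≤ ‖c‖ := by
  rw [norm_algebraMap]
  calc ‖c‖ * ‖(1 : E →L[ℂ] E)‖ ≤ ‖c‖ * 1 := by
        gcongr
        exact ContinuousLinearMap.norm_id_le
    _ = ‖c‖ := mul_one _

lemma aux_res_norm {E : Type*} [NormedAddCommGroup E] [NormedSpace ℂ E] [CompleteSpace E]
    (T : E →L[ℂ] E) {lam mu : ℂ} (hlam : lam ∈ spectrum ℂ T)
    (u : (E →L[ℂ] E)ˣ) (hu : (u : E →L[ℂ] E) = algebraMap ℂ (E →L[ℂ] E) mu - T) :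
    1 ≤ ‖mu - lam‖ * ‖((u⁻¹ : (E →L[ℂ] E)ˣ) : E →L[ℂ] E)‖ := by
  by_contra h
  push_neg at h
  set w : E →L[ℂ] E := algebraMap ℂ (E →L[ℂ] E) (mu - lam) * ((u⁻¹ : (E →L[ℂ] E)ˣ) : E →L[ℂ] E)
    with hw
  have h1 : ‖w‖ < 1 := by
    calc ‖w‖ ≤ ‖algebraMap ℂ (E →L[ℂ] E) (mu - lam)‖ * ‖((u⁻¹ : (E →L[ℂ] E)ˣ) : E →L[ℂ] E)‖ :=
          norm_mul_le _ _
      _ ≤ ‖mu - lam‖ * ‖((u⁻¹ : (E →L[ℂ] E)ˣ) : E →L[ℂ] E)‖ := by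
          gcongr; exact norm_algebraMap_clm_le _
      _ < 1 := h
  have hunit : IsUnit ((1 : E →L[ℂ] E) - w) := (Units.oneSub _ h1).isUnit
  have key : (algebraMap ℂ (E →L[ℂ] E) lam - T) = (u : E →L[ℂ] E) * ((1 : E →L[ℂ] E) - w) := by
    rw [mul_sub, mul_one, hw, ← mul_assoc, ← Algebra.commutes (mu - lam) (u : E →L[ℂ] E),
      mul_assoc, Units.mul_inv, mul_one, hu, map_sub]
    abel
  have : IsUnit (algebraMap ℂ (E →L[ℂ] E) lam - T) := key ▸ u.isUnit.mul hunit
  exact spectrum.mem_iff.mp hlam this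

section eig
variable {E : Type*} [NormedAddCommGroup E] [NormedSpace ℂ E] [CompleteSpace E]

lemma approx_eigen (T : E →L[ℂ] E) {lam : ℂ} (hlam : lam ∈ spectrum ℂ T)
    (hrad : (‖lam‖₊ : ENNReal) = spectralRadius ℂ T) (hlam0 : lam ≠ 0) (n : ℕ) :
    ∃ x : E, ‖x‖ = 1 ∧ ‖T x - lam • x‖ ≤ 3 * ‖lam‖ / (n + 1) := by
  have hnl : (0:ℝ) < ‖lam‖ := norm_pos_iff.mpr hlam0
  have hn1 : (0:ℝ) < (n : ℝ) + 1 := by positivity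
  set t : ℝ := 1 + ((n : ℝ) + 1)⁻¹ with ht
  have ht1 : 1 < t := lt_add_of_pos_right _ (by positivity)
  set mu : ℂ := (t : ℂ) * lam with hmu
  have hmudiff : mu - lam = (((n+1 : ℕ) : ℂ))⁻¹ * lam := by
    rw [hmu, ht]; push_cast; ring
  have hnormdiff : ‖mu - lam‖ = ‖lam‖ / ((n:ℝ)+1) := by
    rw [hmudiff, norm_mul, norm_inv, Complex.norm_natCast]
    push_cast; ring
  -- mu is in the resolvent set
  have hres : mu ∈ resolventSet ℂ T := by
    apply spectrum.mem_resolventSet_of_spectralRadius_lt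
    rw [← hrad]
    have hh : ‖lam‖₊ < ‖mu‖₊ := by
      rw [← NNReal.coe_lt_coe]
      simp only [coe_nnnorm]
      rw [hmu, norm_mul, Complex.norm_real, Real.norm_eq_abs,
        abs_of_pos (by positivity : (0:ℝ) < t)]
      nlinarith
    exact_mod_cast hh
  have hu0 : IsUnit (algebraMap ℂ (E →L[ℂ] E) mu - T) := spectrum.mem_resolventSet_iff.mp hres
  have huspec : (hu0.unit : E →L[ℂ] E) = algebraMap ℂ (E →L[ℂ] E) mu - T := hu0.unit_spec
  have hlow := aux_res_norm T hlam hu0.unit huspec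
  set R : E →L[ℂ] E := ((hu0.unit⁻¹ : (E →L[ℂ] E)ˣ) : E →L[ℂ] E) with hR
  have hRnorm : ((n:ℝ)+1) / ‖lam‖ ≤ ‖R‖ := by
    rw [hnormdiff, div_mul_eq_mul_div, le_div_iff₀ hn1] at hlow
    rw [div_le_iff₀ hnl]
    nlinarith
  have hRpos : (0:ℝ) < ‖R‖ := lt_of_lt_of_le (by positivity) hRnorm
  have hRpos' : ‖R‖₊ ≠ 0 := by
    intro h0
    have : ‖R‖ = 0 := by simpa [coe_nnnorm] using congrArg NNReal.toReal h0
    linarith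
  obtain ⟨u₀, hu₀1, hu₀2⟩ :=
    ContinuousLinearMap.exists_lt_apply_of_lt_opNNNorm R (NNReal.half_lt_self hRpos')
  set wv := R u₀ with hwv
  have hwpos : ‖R‖ / 2 < ‖wv‖ := by
    have := (NNReal.coe_lt_coe).mpr hu₀2
    simpa [NNReal.coe_div, coe_nnnorm] using this
  have hwv0 : (0:ℝ) < ‖wv‖ := lt_of_le_of_lt (by positivity) hwpos
  refine ⟨(‖wv‖)⁻¹ • wv, ?_, ?_⟩
  · rw [norm_smul, norm_inv, norm_norm, inv_mul_cancel₀ hwv0.ne']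
  · -- key identity : mu • wv - T wv = u₀
    have happ : mu • wv - T wv = u₀ := by
      have h2 : ((hu0.unit : E →L[ℂ] E) * R) u₀ = u₀ := by
        rw [Units.mul_inv]; rfl
      rw [huspec] at h2
      simpa [ContinuousLinearMap.mul_apply, ContinuousLinearMap.sub_apply,
        ContinuousLinearMap.algebraMap_apply] using h2
    have hTx : T ((‖wv‖)⁻¹ • wv) - lam • ((‖wv‖)⁻¹ • wv)
        = (‖wv‖)⁻¹ • ((mu - lam) • wv - u₀) := by
      rw [ContinuousLinearMap.map_smul_of_tower]
      rw [smul_comm lam ((‖wv‖)⁻¹ : ℝ) wv]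
      rw [← smul_sub, sub_smul]
      congr 1
      have : T wv = mu • wv - u₀ := by rw [← happ]; abel
      rw [this]; abel
    rw [hTx, norm_smul, norm_inv, norm_norm]
    have hb1 : ‖(mu - lam) • wv - u₀‖ ≤ ‖mu - lam‖ * ‖wv‖ + 1 := by
      calc ‖(mu - lam) • wv - u₀‖ ≤ ‖(mu - lam) • wv‖ + ‖u₀‖ := norm_sub_le _ _
        _ ≤ ‖mu - lam‖ * ‖wv‖ + 1 := by
            rw [norm_smul]
            gcongr
            have := (NNReal.coe_lt_coe).mpr hu₀1
            simpa [coe_nnnorm] using this.le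
    calc ‖wv‖⁻¹ * ‖(mu - lam) • wv - u₀‖ ≤ ‖wv‖⁻¹ * (‖mu - lam‖ * ‖wv‖ + 1) := by gcongr
      _ = ‖mu - lam‖ + ‖wv‖⁻¹ := by field_simp
      _ ≤ ‖lam‖ / ((n:ℝ)+1) + 2 * ‖lam‖ / ((n:ℝ)+1) := by
          gcongr ?_ + ?_
          · rw [hnormdiff]
          · have h3 : ((n:ℝ)+1) / (2 * ‖lam‖) < ‖wv‖ := by
              calc ((n:ℝ)+1) / (2*‖lam‖) = (((n:ℝ)+1)/‖lam‖)/2 := by ring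
                _ ≤ ‖R‖ / 2 := by gcongr
                _ < ‖wv‖ := hwpos
            have h4 : ‖wv‖⁻¹ < (((n:ℝ)+1) / (2 * ‖lam‖))⁻¹ :=
              inv_strictAnti₀ (by positivity) h3
            rw [inv_div] at h4
            calc ‖wv‖⁻¹ ≤ 2*‖lam‖/((n:ℝ)+1) := le_of_lt h4
              _ = 2*‖lam‖/((n:ℝ)+1) := rfl
      _ = 3 * ‖lam‖ / ((n:ℝ)+1) := by ring

end eig

lemma exists_eigen {E : Type*} [NormedAddCommGroup E] [NormedSpace ℂ E] [CompleteSpace E]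
    (T : E →L[ℂ] E) (hT : IsCompactOperator (⇑T)) (h : 0 < spectralRadius ℂ T) :
    ∃ (lam : ℂ) (v : E), v ≠ 0 ∧ T v = lam • v ∧ (‖lam‖₊ : ENNReal) = spectralRadius ℂ T := by
  have hne : (spectrum ℂ T).Nonempty := by
    rcases Set.eq_empty_or_nonempty (spectrum ℂ T) with he | h'
    · exfalso
      have h0 : spectralRadius ℂ T = 0 := by simp [spectralRadius, he]
      rw [h0] at h; exact lt_irrefl _ h
    · exact h'
  obtain ⟨lam, hlam, hrad⟩ := spectrum.exists_nnnorm_eq_spectralRadius_of_nonempty hne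
  have hlam0 : lam ≠ 0 := by
    intro h0
    rw [h0] at hrad
    simp only [nnnorm_zero, ENNReal.coe_zero] at hrad
    rw [← hrad] at h; exact lt_irrefl _ h
  choose x hx1 hx2 using fun n => approx_eigen T hlam hrad hlam0 n
  have hg : Tendsto (fun n : ℕ => 3 * ‖lam‖ / ((n:ℝ) + 1)) atTop (𝓝 0) := by
    have h2 := tendsto_one_div_add_atTop_nhds_zero_nat.const_mul (3 * ‖lam‖)
    simpa [mul_one_div, mul_zero, div_eq_mul_inv] using h2
  have hdiff0 : Tendsto (fun n => T (x n) - lam • x n) atTop (𝓝 0) :=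
    squeeze_zero_norm hx2 hg
  obtain ⟨K, hK, hKmem⟩ := hT
  rw [Metric.mem_nhds_iff] at hKmem
  obtain ⟨ε, hε, hball⟩ := hKmem
  have hmem : ∀ n, T ((ε/2) • x n) ∈ K := by
    intro n
    apply hball
    rw [mem_ball_zero_iff, norm_smul, hx1, Real.norm_eq_abs, abs_of_pos (by positivity), mul_one]
    linarith
  obtain ⟨z, hzK, φ, hφ, hconv⟩ := hK.tendsto_subseq hmem
  have hxsmul : ∀ n, T (x (φ n)) = (2/ε) • T ((ε/2) • x (φ n)) := by
    intro n
    rw [ContinuousLinearMap.map_smul_of_tower, smul_smul]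
    rw [show (2/ε) * (ε/2) = 1 by field_simp, one_smul]
  have hconv2 : Tendsto (fun n => T (x (φ n))) atTop (𝓝 ((2/ε) • z)) := by
    have := hconv.const_smul (2/ε)
    apply this.congr
    intro n
    exact (hxsmul n).symm
  set v : E := lam⁻¹ • ((2/ε) • z) with hv
  have hxconv : Tendsto (fun n => x (φ n)) atTop (𝓝 v) := by
    have h1 : Tendsto (fun n => lam • x (φ n)) atTop (𝓝 ((2/ε) • z)) := by
      have heq : ∀ n, lam • x (φ n) = T (x (φ n)) - (T (x (φ n)) - lam • x (φ n)) := by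
        intro n; abel
      have h3 : Tendsto (fun n => T (x (φ n)) - (T (x (φ n)) - lam • x (φ n))) atTop
          (𝓝 ((2/ε) • z - 0)) :=
        hconv2.sub (hdiff0.comp hφ.tendsto_atTop)
      rw [sub_zero] at h3
      exact h3.congr (fun n => (heq n).symm)
    have h2 := h1.const_smul lam⁻¹
    apply h2.congr
    intro n
    rw [smul_smul, inv_mul_cancel₀ hlam0, one_smul]
  refine ⟨lam, v, ?_, ?_, hrad⟩
  · have hnv : ‖v‖ = 1 := by
      have h4 : Tendsto (fun n => ‖x (φ n)‖) atTop (𝓝 ‖v‖) := hxconv.norm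
      have h5 : Tendsto (fun n : ℕ => (1:ℝ)) atTop (𝓝 1) := tendsto_const_nhds
      have := tendsto_nhds_unique h4 (h5.congr (fun n => (hx1 (φ n)).symm))
      linarith
    intro h0; rw [h0] at hnv; simp at hnv
  · have hTv : Tendsto (fun n => T (x (φ n))) atTop (𝓝 (T v)) :=
      (T.continuous.tendsto v).comp hxconv
    have h6 : T v = (2/ε) • z := tendsto_nhds_unique hTv hconv2
    rw [h6, hv, smul_smul, mul_inv_cancel₀ hlam0, one_smul]

lemma dirB {B B₀ : Type*} [NormedAddCommGroup B] [NormedSpace ℂ B] [CompleteSpace B]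
    [NormedAddCommGroup B₀] [NormedSpace ℂ B₀] [CompleteSpace B₀]
    (ι : B₀ →ₗ[ℂ] B) (hinj : Function.Injective ι)
    (A : B →L[ℂ] B) (A₀ : B₀ →L[ℂ] B₀)
    (hA₀comp : IsCompactOperator (⇑A₀))
    (hcomm : ∀ x : B₀, A (ι x) = ι (A₀ x)) :
    spectralRadius ℂ A₀ ≤ spectralRadius ℂ A := by
  rcases (zero_le : (0:ℝ≥0∞) ≤ spectralRadius ℂ A₀).eq_or_lt with h0 | hpos
  · rw [← h0]; exact zero_le
  obtain ⟨lam, v, hv0, hTv, hrad⟩ := exists_eigen A₀ hA₀comp hpos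
  have hAv : A (ι v) = lam • (ι v) := by
    rw [hcomm, hTv, map_smul]
  have hiv0 : ι v ≠ 0 := fun h => hv0 (hinj (by simpa using h))
  have hmem : lam ∈ spectrum ℂ A := by
    rw [spectrum.mem_iff]
    intro hu'
    obtain ⟨u, huspec⟩ := hu'
    have h2 : (algebraMap ℂ (B →L[ℂ] B) lam - A) (ι v) = 0 := by
      simp [ContinuousLinearMap.sub_apply, ContinuousLinearMap.algebraMap_apply, hAv]
    have h4 : ((u⁻¹ : (B →L[ℂ] B)ˣ) : B →L[ℂ] B) * (algebraMap ℂ (B →L[ℂ] B) lam - A)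
        = 1 := by
      rw [← huspec]
      exact u.inv_mul
    have h3 : ((u⁻¹ : (B →L[ℂ] B)ˣ) : B →L[ℂ] B)
        ((algebraMap ℂ (B →L[ℂ] B) lam - A) (ι v)) = ι v := by
      rw [← ContinuousLinearMap.mul_apply, h4, ContinuousLinearMap.one_apply]
    rw [h2, map_zero] at h3
    exact hiv0 h3.symm
  rw [← hrad]
  calc (‖lam‖₊ : ENNReal) ≤ ⨆ k ∈ spectrum ℂ A, (‖k‖₊ : ENNReal) :=
        le_iSup₂ (f := fun k (_ : k ∈ spectrum ℂ A) => (‖k‖₊ : ENNReal)) lam hmem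
    _ = spectralRadius ℂ A := rfl

lemma net_lemma {B B₀ : Type*} [NormedAddCommGroup B] [NormedSpace ℂ B]
    [NormedAddCommGroup B₀] [NormedSpace ℂ B₀]
    (ι : B₀ →ₗ[ℂ] B) (hdense : DenseRange ι)
    (A : B →L[ℂ] B) (hAcomp : IsCompactOperator (⇑A))
    (δ : ℝ) (hδ : 0 < δ) :
    ∃ M : ℝ, 0 ≤ M ∧ ∀ v : B, ‖v‖ ≤ 1 → ∃ x : B₀, ‖x‖ ≤ M ∧ ‖A v - ι x‖ ≤ δ := by
  obtain ⟨K, hK, hKmem⟩ := hAcomp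
  rw [Metric.mem_nhds_iff] at hKmem
  obtain ⟨r, hr, hball⟩ := hKmem
  set ε := δ * r / 8 with hε
  have hεpos : 0 < ε := by positivity
  obtain ⟨t, htfin, htcover⟩ := (Metric.totallyBounded_iff.mp hK.totallyBounded) ε hεpos
  have hch : ∀ c : B, ∃ x : B₀, dist c (ι x) < ε := fun c => hdense.exists_dist_lt c hεpos
  choose g hg using hch
  obtain ⟨M₀, hM₀⟩ := (htfin.image fun c => ‖g c‖).bddAbove
  refine ⟨(2/r) * max M₀ 0, by positivity, ?_⟩
  intro v hv
  set w := (r/2) • v with hw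
  have hwball : w ∈ Metric.ball (0:B) r := by
    rw [mem_ball_zero_iff, hw, norm_smul, Real.norm_eq_abs, abs_of_pos (by positivity)]
    calc (r/2) * ‖v‖ ≤ (r/2) * 1 := by gcongr
      _ < r := by linarith
  have hAwK : A w ∈ K := hball hwball
  have hcov := htcover hAwK
  rw [Set.mem_iUnion₂] at hcov
  obtain ⟨c, hct, hcball⟩ := hcov
  refine ⟨(2/r) • g c, ?_, ?_⟩
  · rw [norm_smul, Real.norm_eq_abs, abs_of_pos (by positivity)]
    have hgc : ‖g c‖ ≤ max M₀ 0 :=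
      le_max_of_le_left (hM₀ (Set.mem_image_of_mem _ hct))
    gcongr
  · have h1 : ‖A w - ι (g c)‖ ≤ 2*ε := by
      calc ‖A w - ι (g c)‖ = dist (A w) (ι (g c)) := (dist_eq_norm _ _).symm
        _ ≤ dist (A w) c + dist c (ι (g c)) := dist_triangle _ _ _
        _ ≤ ε + ε := by
            have hc1 : dist (A w) c < ε := Metric.mem_ball.mp hcball
            have hc2 := hg c
            linarith
        _ = 2*ε := by ring
    have h2 : A v = (2/r) • A w := by
      rw [hw, ContinuousLinearMap.map_smul_of_tower, smul_smul]
      rw [show (2/r)*(r/2) = 1 by field_simp, one_smul]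
    have h3 : ι ((2/r) • g c) = (2/r) • ι (g c) := ι.map_smul_of_tower _ _
    rw [h2, h3, ← smul_sub, norm_smul, Real.norm_eq_abs, abs_of_pos (by positivity)]
    calc (2/r) * ‖A w - ι (g c)‖ ≤ (2/r) * (2*ε) := by gcongr
      _ = δ/2 := by rw [hε]; field_simp; ring
      _ ≤ δ := by linarith

lemma pow_comm_lemma {B B₀ : Type*} [NormedAddCommGroup B] [NormedSpace ℂ B]
    [NormedAddCommGroup B₀] [NormedSpace ℂ B₀]
    (ι : B₀ →ₗ[ℂ] B) (A : B →L[ℂ] B) (A₀ : B₀ →L[ℂ] B₀)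
    (hcomm : ∀ x : B₀, A (ι x) = ι (A₀ x)) :
    ∀ (n : ℕ) (x : B₀), (A^n) (ι x) = ι ((A₀^n) x) := by
  intro n
  induction n with
  | zero => intro x; simp
  | succ n ih =>
    intro x
    rw [pow_succ, pow_succ, ContinuousLinearMap.mul_apply, ContinuousLinearMap.mul_apply,
      hcomm, ih]

lemma dirA {B B₀ : Type*} [NormedAddCommGroup B] [NormedSpace ℂ B] [CompleteSpace B]
    [NormedAddCommGroup B₀] [NormedSpace ℂ B₀] [CompleteSpace B₀]
    (ι : B₀ →ₗ[ℂ] B) (hdense : DenseRange ι)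
    (C : ℝ) (hC : 0 < C) (hbound : ∀ x : B₀, ‖ι x‖ ≤ C * ‖x‖)
    (A : B →L[ℂ] B) (A₀ : B₀ →L[ℂ] B₀)
    (hAcomp : IsCompactOperator (⇑A))
    (hcomm : ∀ x : B₀, A (ι x) = ι (A₀ x)) :
    spectralRadius ℂ A ≤ spectralRadius ℂ A₀ := by
  by_contra hlt
  push_neg at hlt
  obtain ⟨s, hs1, hs2⟩ := ENNReal.lt_iff_exists_nnreal_btwn.mp hlt
  suffices H : spectralRadius ℂ A ≤ s from absurd H (not_le.mpr hs2)
  obtain ⟨s', hs'1, hs'2⟩ := ENNReal.lt_iff_exists_nnreal_btwn.mp hs1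
  have hs's : (s' : ℝ) < s := by exact_mod_cast hs'2
  have hs'pos : (0:ℝ) < s' := by
    have h2 : (0:ℝ≥0∞) < s' := lt_of_le_of_lt zero_le hs'1
    exact_mod_cast h2
  have hspos : (0:ℝ) < s := lt_trans hs'pos hs's
  -- Gelfand bound on ‖A₀^n‖
  have hGel := spectrum.pow_nnnorm_pow_one_div_tendsto_nhds_spectralRadius A₀
  have hev : ∀ᶠ n : ℕ in Filter.atTop, (‖A₀^n‖₊ : ℝ≥0∞) ^ (1/(n:ℝ)) < (s' : ℝ≥0∞) :=
    hGel.eventually_lt_const hs'1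
  obtain ⟨N₁, hN₁⟩ := Filter.eventually_atTop.mp hev
  set N := max N₁ 1 with hNdef
  have hA₀bound : ∀ n, N ≤ n → ‖A₀^n‖ ≤ (s' : ℝ)^n := by
    intro n hn
    have hn1 : 1 ≤ n := le_trans (le_max_right _ _) hn
    have h1 := (hN₁ n (le_trans (le_max_left _ _) hn)).le
    have h2 : (((‖A₀^n‖₊ : ℝ≥0∞)) ^ (1/(n:ℝ)))^(n:ℝ) ≤ ((s' : ℝ≥0∞))^(n:ℝ) :=
      ENNReal.rpow_le_rpow h1 (by positivity)
    rw [← ENNReal.rpow_mul, one_div, inv_mul_cancel₀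
      (Nat.cast_ne_zero.mpr (by omega) : ((n:ℝ)) ≠ 0), ENNReal.rpow_one] at h2
    rw [ENNReal.rpow_natCast, ← ENNReal.coe_pow, ENNReal.coe_le_coe] at h2
    have h3 := (NNReal.coe_le_coe).mpr h2
    simpa [coe_nnnorm, NNReal.coe_pow] using h3
  obtain ⟨M, hM0, hnet⟩ := net_lemma ι hdense A hAcomp (s' : ℝ) hs'pos
  set D := C * M with hD
  have hD0 : 0 ≤ D := by positivity
  -- recursion
  have hrec : ∀ n : ℕ, ‖A^(n+1)‖ ≤ D * ‖A₀^n‖ + (s':ℝ) * ‖A^n‖ := by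
    intro n
    apply ContinuousLinearMap.opNorm_le_bound _ (by positivity)
    intro v
    rcases eq_or_ne v 0 with rfl | hv0
    · simp only [map_zero, norm_zero, mul_zero]
      exact le_rfl
    have hvpos : 0 < ‖v‖ := norm_pos_iff.mpr hv0
    set uv := ‖v‖⁻¹ • v with huv
    have huv1 : ‖uv‖ ≤ 1 := by
      rw [huv, norm_smul, norm_inv, norm_norm, inv_mul_cancel₀ hvpos.ne']
    obtain ⟨x, hx1, hx2⟩ := hnet uv huv1
    have hdec : (A^(n+1)) uv = ι ((A₀^n) x) + (A^n) (A uv - ι x) := by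
      rw [pow_succ, ContinuousLinearMap.mul_apply, map_sub,
        pow_comm_lemma ι A A₀ hcomm n x]
      abel
    have hb : ‖(A^(n+1)) uv‖ ≤ D * ‖A₀^n‖ + (s':ℝ) * ‖A^n‖ := by
      rw [hdec]
      calc ‖ι ((A₀^n) x) + (A^n) (A uv - ι x)‖
          ≤ ‖ι ((A₀^n) x)‖ + ‖(A^n) (A uv - ι x)‖ := norm_add_le _ _
        _ ≤ C * (‖A₀^n‖ * M) + ‖A^n‖ * (s':ℝ) := by
            apply add_le_add
            · calc ‖ι ((A₀^n) x)‖ ≤ C * ‖(A₀^n) x‖ := hbound _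
                _ ≤ C * (‖A₀^n‖ * ‖x‖) :=
                    mul_le_mul_of_nonneg_left ((A₀^n).le_opNorm x) hC.le
                _ ≤ C * (‖A₀^n‖ * M) := by
                    apply mul_le_mul_of_nonneg_left _ hC.le
                    exact mul_le_mul_of_nonneg_left hx1 (norm_nonneg _)
            · calc ‖(A^n) (A uv - ι x)‖ ≤ ‖A^n‖ * ‖A uv - ι x‖ := (A^n).le_opNorm _
                _ ≤ ‖A^n‖ * (s':ℝ) := mul_le_mul_of_nonneg_left hx2 (norm_nonneg _)
        _ = D * ‖A₀^n‖ + (s':ℝ) * ‖A^n‖ := by rw [hD]; ring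
    have hveq : v = ‖v‖ • uv := by
      rw [huv, smul_smul, mul_inv_cancel₀ hvpos.ne', one_smul]
    calc ‖(A^(n+1)) v‖ = ‖(A^(n+1)) (‖v‖ • uv)‖ := by rw [← hveq]
      _ = ‖v‖ * ‖(A^(n+1)) uv‖ := by
          rw [ContinuousLinearMap.map_smul_of_tower, norm_smul, Real.norm_eq_abs,
            abs_of_pos hvpos]
      _ ≤ ‖v‖ * (D * ‖A₀^n‖ + (s':ℝ) * ‖A^n‖) := mul_le_mul_of_nonneg_left hb (norm_nonneg _)
      _ = (D * ‖A₀^n‖ + (s':ℝ) * ‖A^n‖) * ‖v‖ := by ring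
  have hrec2 : ∀ n, N ≤ n → ‖A^(n+1)‖ ≤ D * (s':ℝ)^n + (s':ℝ) * ‖A^n‖ := by
    intro n hn
    calc ‖A^(n+1)‖ ≤ D * ‖A₀^n‖ + (s':ℝ) * ‖A^n‖ := hrec n
      _ ≤ D * (s':ℝ)^n + (s':ℝ) * ‖A^n‖ :=
          add_le_add (mul_le_mul_of_nonneg_left (hA₀bound n hn) hD0) le_rfl
  have hind : ∀ m : ℕ, ‖A^(N+m)‖ ≤ (s':ℝ)^m * ‖A^N‖ + (D/(s':ℝ)) * m * (s':ℝ)^(N+m) := by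
    intro m
    induction m with
    | zero => simp
    | succ m ih =>
      calc ‖A^(N+(m+1))‖ ≤ D * (s':ℝ)^(N+m) + (s':ℝ) * ‖A^(N+m)‖ := hrec2 (N+m) (by omega)
        _ ≤ D * (s':ℝ)^(N+m)
            + (s':ℝ) * ((s':ℝ)^m * ‖A^N‖ + (D/(s':ℝ)) * m * (s':ℝ)^(N+m)) :=
            add_le_add le_rfl (mul_le_mul_of_nonneg_left ih hs'pos.le)
        _ = (s':ℝ)^(m+1) * ‖A^N‖ + (D/(s':ℝ)) * (↑(m+1)) * (s':ℝ)^(N+(m+1)) := by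
            rw [show N+(m+1) = (N+m)+1 from by omega]
            rw [pow_succ ((s':ℝ)) (N+m), pow_succ ((s':ℝ)) m]
            push_cast
            field_simp
            ring
  set E := ‖A^N‖ / (s':ℝ)^N with hE
  have hEbound : ∀ m : ℕ, ‖A^(N+m)‖ ≤ (E + (D/(s':ℝ)) * (↑(N+m))) * (s':ℝ)^(N+m) := by
    intro m
    calc ‖A^(N+m)‖ ≤ (s':ℝ)^m * ‖A^N‖ + (D/(s':ℝ)) * m * (s':ℝ)^(N+m) := hind m
      _ = E * (s':ℝ)^(N+m) + (D/(s':ℝ)) * m * (s':ℝ)^(N+m) := by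
          rw [hE, pow_add]
          field_simp
      _ ≤ E * (s':ℝ)^(N+m) + (D/(s':ℝ)) * (↑(N+m)) * (s':ℝ)^(N+m) := by
          apply add_le_add le_rfl
          apply mul_le_mul_of_nonneg_right _ (pow_nonneg hs'pos.le _)
          apply mul_le_mul_of_nonneg_left _ (div_nonneg hD0 hs'pos.le)
          exact_mod_cast Nat.le_add_left m N
      _ = (E + (D/(s':ℝ)) * (↑(N+m))) * (s':ℝ)^(N+m) := by ring
  have htend : Filter.Tendsto (fun n : ℕ => (E + (D/(s':ℝ))*n) * ((s':ℝ)/s)^n)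
      Filter.atTop (𝓝 0) := by
    have hr1 : (0:ℝ) ≤ (s':ℝ)/s := by positivity
    have hr2 : (s':ℝ)/s < 1 := by rw [div_lt_one hspos]; exact hs's
    have t1 : Filter.Tendsto (fun n : ℕ => E * ((s':ℝ)/s)^n) Filter.atTop (𝓝 0) := by
      simpa using (tendsto_pow_atTop_nhds_zero_of_lt_one hr1 hr2).const_mul E
    have t2 : Filter.Tendsto (fun n : ℕ => (D/(s':ℝ)) * (n * ((s':ℝ)/s)^n))
        Filter.atTop (𝓝 0) := by
      simpa using (tendsto_self_mul_const_pow_of_lt_one hr1 hr2).const_mul (D/(s':ℝ))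
    have t3 := t1.add t2
    rw [add_zero] at t3
    exact t3.congr (fun n => by ring)
  have hev2 : ∀ᶠ n : ℕ in Filter.atTop, (E + (D/(s':ℝ))*n) * ((s':ℝ)/s)^n ≤ 1 :=
    (htend.eventually_lt_const (by norm_num : (0:ℝ) < 1)).mono (fun n h => h.le)
  obtain ⟨N₂, hN₂⟩ := Filter.eventually_atTop.mp hev2
  have hfinal : ‖A^(N+N₂)‖ ≤ (s:ℝ)^(N+N₂) := by
    have h1 := hEbound N₂
    have h2 := hN₂ (N+N₂) (by omega)
    calc ‖A^(N+N₂)‖ ≤ (E + (D/(s':ℝ)) * (↑(N+N₂))) * (s':ℝ)^(N+N₂) := h1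
      _ = ((E + (D/(s':ℝ)) * (↑(N+N₂))) * ((s':ℝ)/s)^(N+N₂)) * (s:ℝ)^(N+N₂) := by
          rw [div_pow]
          field_simp
      _ ≤ 1 * (s:ℝ)^(N+N₂) := by
          apply mul_le_mul_of_nonneg_right _ (pow_nonneg hspos.le _)
          exact h2
      _ = (s:ℝ)^(N+N₂) := one_mul _
  obtain ⟨k, hk⟩ : ∃ k, N + N₂ = k + 1 := ⟨N + N₂ - 1, by omega⟩
  rw [hk] at hfinal
  have hnn : ‖A^(k+1)‖₊ ≤ s^(k+1) := by
    rw [← NNReal.coe_le_coe]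
    simpa [coe_nnnorm, NNReal.coe_pow] using hfinal
  have hstep := spectrum.spectralRadius_le_pow_nnnorm_pow_one_div ℂ A k
  have hone : (‖(1 : B →L[ℂ] B)‖₊ : ℝ≥0∞) ^ (1/((k:ℝ)+1)) ≤ 1 := by
    apply ENNReal.rpow_le_one _ (by positivity)
    have h4 : ‖(1 : B →L[ℂ] B)‖ ≤ 1 := ContinuousLinearMap.norm_id_le
    have h5 : ‖(1 : B →L[ℂ] B)‖₊ ≤ 1 := by
      rw [← NNReal.coe_le_coe]
      simpa [coe_nnnorm] using h4
    exact_mod_cast h5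
  have hmain : (‖A^(k+1)‖₊ : ℝ≥0∞) ^ (1/((k:ℝ)+1)) ≤ (s : ℝ≥0∞) := by
    have hb : (‖A^(k+1)‖₊ : ℝ≥0∞) ≤ ((s^(k+1) : ℝ≥0) : ℝ≥0∞) := by exact_mod_cast hnn
    calc (‖A^(k+1)‖₊ : ℝ≥0∞) ^ (1/((k:ℝ)+1))
        ≤ ((s^(k+1) : ℝ≥0) : ℝ≥0∞) ^ (1/((k:ℝ)+1)) := ENNReal.rpow_le_rpow hb (by positivity)
      _ = (s : ℝ≥0∞) := by
          rw [ENNReal.coe_pow, ← ENNReal.rpow_natCast ((s : ℝ≥0∞)) (k+1), ← ENNReal.rpow_mul]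
          push_cast
          rw [mul_one_div, div_self (by positivity : ((k:ℝ)+1) ≠ 0), ENNReal.rpow_one]
  calc spectralRadius ℂ A
      ≤ (‖A^(k+1)‖₊ : ℝ≥0∞) ^ (1/((k:ℝ)+1)) * (‖(1 : B →L[ℂ] B)‖₊ : ℝ≥0∞) ^ (1/((k:ℝ)+1)) := by
        exact_mod_cast hstep
    _ ≤ (s : ℝ≥0∞) * 1 := mul_le_mul' hmain hone
    _ = s := mul_one _

/-- If a compact bounded operator `A` on a Banach space `B` restricts (through a dense
continuous embedding `ι : B₀ → B`) to a compact bounded operator `A₀` on a Banach space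
`B₀`, then the spectral radii agree. -/
theorem stmt3 {B B₀ : Type*} [NormedAddCommGroup B] [NormedSpace ℂ B] [CompleteSpace B]
    [NormedAddCommGroup B₀] [NormedSpace ℂ B₀] [CompleteSpace B₀]
    (ι : B₀ →ₗ[ℂ] B) (hinj : Function.Injective ι) (hdense : DenseRange ι)
    (C : ℝ) (hC : 0 < C) (hbound : ∀ x : B₀, ‖ι x‖ ≤ C * ‖x‖)
    (A : B →L[ℂ] B) (A₀ : B₀ →L[ℂ] B₀)
    (hAcomp : IsCompactOperator (⇑A)) (hA₀comp : IsCompactOperator (⇑A₀))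
    (hcomm : ∀ x : B₀, A (ι x) = ι (A₀ x)) :
    spectralRadius ℂ A = spectralRadius ℂ A₀ := by
  apply le_antisymm
  · exact dirA ι hdense C hC hbound A A₀ hAcomp hcomm
  · exact dirB ι hinj A A₀ hA₀comp hcomm
end

section
/- For η > 1 and x ∈ [0,1], define δ[x,η] = (η+η⁻¹)/2 − x if x > 2/(η+η⁻¹), and δ[x,η] = ((η−η⁻¹)/2)·√(1−x²) otherwise. Then the closed ball in ℂ of center x and radius δ[x,η] is contained in the closed Bernstein ellipse Ē_η = { z ∈ ℂ : |z−1| + |z+1| ≤ η + η⁻¹ }. -/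
/-- The radius `δ[x,η]` of a disk around `x ∈ [0,1]` contained in the closed
Bernstein ellipse of size `η`. -/
noncomputable def bernDelta (η x : ℝ) : ℝ :=
  if x > 2 / (η + η⁻¹) then (η + η⁻¹) / 2 - x else (η - η⁻¹) / 2 * Real.sqrt (1 - x ^ 2)

set_option maxHeartbeats 1000000 in
/-- The closed ball in `ℂ` of center `x ∈ [0,1]` and radius `δ[x,η]` is contained in the
closed Bernstein ellipse `{z : |z−1| + |z+1| ≤ η + η⁻¹}`. -/
theorem stmt16 (η : ℝ) (hη : 1 < η) (x : ℝ) (hx : x ∈ Set.Icc (0 : ℝ) 1) :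
    ∀ z : ℂ, ‖z - (x : ℂ)‖ ≤ bernDelta η x →
      ‖z - 1‖ + ‖z + 1‖ ≤ η + η⁻¹ := by
  obtain ⟨hx0, hx1⟩ := hx
  have hη0 : (0:ℝ) < η := lt_trans one_pos hη
  set e := η⁻¹ with he
  have hee : η * e = 1 := mul_inv_cancel₀ (ne_of_gt hη0)
  have he0 : 0 < e := inv_pos.mpr hη0
  have he1 : e < 1 := by
    have := inv_lt_one_of_one_lt₀ hη
    simpa [he] using this
  set a := (η + e) / 2 with ha
  set b := (η - e) / 2 with hb
  have hab : a ^ 2 - b ^ 2 = 1 := by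
    rw [ha, hb]; nlinarith [hee]
  have ha1 : 1 < a := by rw [ha]; nlinarith
  have hb0 : 0 < b := by rw [hb]; nlinarith
  have ha0 : 0 < a := lt_trans one_pos ha1
  have hb2 : b ^ 2 = a ^ 2 - 1 := by linarith
  intro z hz
  set u := z.re with hu
  set v := z.im with hv
  -- squared disk condition
  have hzsq : (u - x) ^ 2 + v ^ 2 ≤ (bernDelta η x) ^ 2 := by
    have h1 : (‖z - (x:ℂ)‖) ^ 2 ≤ (bernDelta η x) ^ 2 :=
      pow_le_pow_left₀ (norm_nonneg _) hz 2
    have h2 : (‖z - (x:ℂ)‖) ^ 2 = (u - x) ^ 2 + v ^ 2 := by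
      rw [Complex.sq_norm, Complex.normSq_apply]
      simp [hu, hv]
      ring
    linarith [h2 ▸ h1]
  -- ellipse condition
  have E : b ^ 2 * u ^ 2 + a ^ 2 * v ^ 2 ≤ a ^ 2 * b ^ 2 := by
    by_cases hcase : x > 2 / (η + η⁻¹)
    · have hδ : bernDelta η x = a - x := by rw [bernDelta, if_pos hcase, ha]
      rw [hδ] at hzsq
      have hsum : (0:ℝ) < η + η⁻¹ := by positivity
      have hax : 1 < a * x := by
        have := (div_lt_iff₀ hsum).mp hcase
        rw [ha]; nlinarith
      have hxa : x < a := by nlinarith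
      have hd : (u - a) * (u + a - 2 * x) ≤ 0 := by nlinarith [sq_nonneg v]
      have hua : u ≤ a := by
        by_contra hcon
        push_neg at hcon
        nlinarith [mul_pos (sub_pos.mpr hcon) (show (0:ℝ) < u + a - 2 * x by linarith)]
      have h2 : 0 ≤ 2 * a ^ 2 * x - a - u := by
        nlinarith [mul_pos ha0 (show (0:ℝ) < a * x - 1 by linarith)]
      rw [hb2]
      nlinarith [mul_nonneg (sub_nonneg.mpr hua) h2,
        mul_le_mul_of_nonneg_left hzsq (sq_nonneg a)]
    · have hδ : bernDelta η x = b * Real.sqrt (1 - x ^ 2) := by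
        rw [bernDelta, if_neg hcase, hb]
      have hx2 : (0:ℝ) ≤ 1 - x ^ 2 := by nlinarith
      have hδ2 : (bernDelta η x) ^ 2 = b ^ 2 * (1 - x ^ 2) := by
        rw [hδ, mul_pow, Real.sq_sqrt hx2]
      rw [hδ2, hb2] at hzsq
      rw [hb2]
      nlinarith [sq_nonneg (u - a ^ 2 * x),
        mul_le_mul_of_nonneg_left hzsq (sq_nonneg a)]
  -- bounds on u
  have hu2 : u ^ 2 ≤ a ^ 2 := by nlinarith [sq_nonneg v, mul_pos hb0 hb0]
  have hua2 : u ≤ a ^ 2 := by nlinarith [sq_nonneg (u - a)]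
  have hum2 : -(a ^ 2) ≤ u := by nlinarith [sq_nonneg (u + a)]
  -- distance bounds
  have h1 : ‖z - 1‖ ≤ (a ^ 2 - u) / a := by
    have e1 : (‖z - 1‖) ^ 2 = (u - 1) ^ 2 + v ^ 2 := by
      rw [Complex.sq_norm, Complex.normSq_apply]
      simp [hu, hv]
      ring
    have hnn : 0 ≤ (a ^ 2 - u) / a := by
      apply div_nonneg _ (le_of_lt ha0); linarith
    have hsq : (u - 1) ^ 2 + v ^ 2 ≤ ((a ^ 2 - u) / a) ^ 2 := by
      rw [div_pow, le_div_iff₀ (by positivity)]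
      nlinarith [E, hab]
    nlinarith [e1, hsq, norm_nonneg (z - 1), hnn]
  have h2 : ‖z + 1‖ ≤ (a ^ 2 + u) / a := by
    have e1 : (‖z + 1‖) ^ 2 = (u + 1) ^ 2 + v ^ 2 := by
      rw [Complex.sq_norm, Complex.normSq_apply]
      simp [hu, hv]
      ring
    have hnn : 0 ≤ (a ^ 2 + u) / a := by
      apply div_nonneg _ (le_of_lt ha0); linarith
    have hsq : (u + 1) ^ 2 + v ^ 2 ≤ ((a ^ 2 + u) / a) ^ 2 := by
      rw [div_pow, le_div_iff₀ (by positivity)]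
      nlinarith [E, hab]
    nlinarith [e1, hsq, norm_nonneg (z + 1), hnn]
  have hsum : (a ^ 2 - u) / a + (a ^ 2 + u) / a = η + η⁻¹ := by
    rw [← he]
    field_simp
    rw [ha]; ring
  linarith [h1, h2, hsum ▸ (add_le_add h1 h2)]
end

section
/- Let F : X → X be a map on a Banach space, X̄ ∈ X, and A : X → X a bounded injective linear operator. Suppose Y, Z₁, Z₂ ≥ 0 satisfy ‖AF(X̄)‖ ≤ Y, ‖I − AF'(X̄)‖ ≤ Z₁, and ‖A(F'(X) − F'(X̄))‖ ≤ Z₂‖X − X̄‖ for all X ∈ X, where F is Fréchet differentiable. If Z₁ < 1 and 2YZ₂ < (1−Z₁)², then for every r with (1 − Z₁ − √((1−Z₁)² − 2YZ₂))/Z₂ ≤ r < (1−Z₁)/Z₂, there exists a unique zero X* of F with ‖X* − X̄‖ ≤ r. -/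
set_option maxHeartbeats 1000000


/-- Newton–Kantorovich type theorem: under the `Y`, `Z₁`, `Z₂` bounds with `Z₁ < 1` and
`2YZ₂ < (1−Z₁)²`, for every admissible radius `r` there is a unique zero of `F` in the
closed ball of radius `r` around the approximate solution `X̄`. -/
theorem stmt17 {X : Type*} [NormedAddCommGroup X] [NormedSpace ℝ X] [CompleteSpace X]
    (F : X → X) (DF : X → X →L[ℝ] X) (hFderiv : ∀ x : X, HasFDerivAt F (DF x) x)
    (A : X →L[ℝ] X) (hAinj : Function.Injective A)
    (Xbar : X) (Y Z₁ Z₂ : ℝ) (hY : 0 ≤ Y) (hZ₁ : 0 ≤ Z₁) (hZ₂ : 0 ≤ Z₂)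
    (hbY : ‖A (F Xbar)‖ ≤ Y)
    (hbZ₁ : ‖ContinuousLinearMap.id ℝ X - A.comp (DF Xbar)‖ ≤ Z₁)
    (hbZ₂ : ∀ x : X, ‖A.comp (DF x - DF Xbar)‖ ≤ Z₂ * ‖x - Xbar‖)
    (hZ₁lt : Z₁ < 1) (hdisc : 2 * Y * Z₂ < (1 - Z₁) ^ 2) :
    ∀ r : ℝ, (1 - Z₁ - Real.sqrt ((1 - Z₁) ^ 2 - 2 * Y * Z₂)) / Z₂ ≤ r →
      r < (1 - Z₁) / Z₂ →
      ∃! x : X, F x = 0 ∧ ‖x - Xbar‖ ≤ r := by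
  intro r hr1 hr2
  rcases eq_or_lt_of_le hZ₂ with hZ0 | hZ₂pos
  · exfalso
    rw [← hZ0, div_zero] at hr1 hr2
    linarith
  -- basic numeric facts
  set s := Real.sqrt ((1 - Z₁) ^ 2 - 2 * Y * Z₂) with hs
  have hdiscpos : (0:ℝ) ≤ (1 - Z₁) ^ 2 - 2 * Y * Z₂ := by linarith
  have hssq : s ^ 2 = (1 - Z₁) ^ 2 - 2 * Y * Z₂ := Real.sq_sqrt hdiscpos
  have hs0 : 0 ≤ s := Real.sqrt_nonneg _
  have hYZ : 0 ≤ 2 * Y * Z₂ := by positivity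
  have hsle : s ≤ 1 - Z₁ := by nlinarith
  have hr0 : 0 ≤ r := le_trans (div_nonneg (by linarith) hZ₂) hr1
  have hrlow : 1 - Z₁ - s ≤ Z₂ * r := by
    have := (div_le_iff₀ hZ₂pos).mp hr1; linarith
  have hrup : Z₂ * r < 1 - Z₁ := by
    have := (lt_div_iff₀ hZ₂pos).mp hr2; linarith
  have hrZ : Z₁ + Z₂ * r < 1 := by linarith
  have hkey : Y + Z₁ * r + Z₂ * r ^ 2 / 2 ≤ r := by
    have h1 : 0 ≤ s - (Z₂ * r - (1 - Z₁)) := by linarith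
    have h2 : 0 ≤ s + (Z₂ * r - (1 - Z₁)) := by linarith
    have h3 : (Z₂ * r - (1 - Z₁)) ^ 2 ≤ s ^ 2 := by nlinarith [mul_nonneg h1 h2]
    nlinarith [h3, hZ₂pos]
  -- the Newton-like operator
  set T : X → X := fun x => x - A (F x) with hTdef
  have hT : ∀ x : X, HasFDerivAt T (ContinuousLinearMap.id ℝ X - A.comp (DF x)) x := by
    intro x
    exact (hasFDerivAt_id x).sub (A.hasFDerivAt.comp x (hFderiv x))
  have hDT : ∀ z : X, ‖ContinuousLinearMap.id ℝ X - A.comp (DF z)‖ ≤ Z₁ + Z₂ * ‖z - Xbar‖ := by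
    intro z
    have h1 : (ContinuousLinearMap.id ℝ X - A.comp (DF z)) =
        (ContinuousLinearMap.id ℝ X - A.comp (DF Xbar)) - A.comp (DF z - DF Xbar) := by
      rw [ContinuousLinearMap.comp_sub]; abel
    rw [h1]
    exact (norm_sub_le _ _).trans (add_le_add hbZ₁ (hbZ₂ z))
  have hTX : ‖T Xbar - Xbar‖ ≤ Y := by
    have : T Xbar - Xbar = -(A (F Xbar)) := by simp [hTdef]
    rw [this, norm_neg]; exact hbY
  -- Lipschitz on the closed ball
  have hlip : ∀ x ∈ Metric.closedBall Xbar r, ∀ y ∈ Metric.closedBall Xbar r,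
      ‖T x - T y‖ ≤ (Z₁ + Z₂ * r) * ‖x - y‖ := by
    intro x hx y hy
    refine Convex.norm_image_sub_le_of_norm_hasFDerivWithin_le
      (fun z _ => (hT z).hasFDerivWithinAt) (fun z hz => ?_)
      (convex_closedBall Xbar r) hy hx
    have hz' : ‖z - Xbar‖ ≤ r := by
      rw [← dist_eq_norm]; exact Metric.mem_closedBall.mp hz
    exact (hDT z).trans (by nlinarith [norm_nonneg (z - Xbar)])
  -- T maps the ball into itself (sharp quadratic estimate)
  have hmaps : Set.MapsTo T (Metric.closedBall Xbar r) (Metric.closedBall Xbar r) := by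
    intro x hx
    have hd : ‖x - Xbar‖ ≤ r := by rw [← dist_eq_norm]; exact Metric.mem_closedBall.mp hx
    set d : ℝ := ‖x - Xbar‖ with hddef
    have hd0 : 0 ≤ d := norm_nonneg _
    set v : X := x - Xbar with hvdef
    set f : ℝ → X := fun t => T (Xbar + t • v) - T Xbar with hfdef
    set f' : ℝ → X := fun t =>
      (ContinuousLinearMap.id ℝ X - A.comp (DF (Xbar + t • v))) v with hf'def
    have hpath : ∀ t : ℝ, HasDerivAt (fun t : ℝ => Xbar + t • v) v t := by
      intro t
      simpa using ((hasDerivAt_id t).smul_const v).const_add Xbar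
    have hfderiv : ∀ t : ℝ, HasDerivAt f (f' t) t := by
      intro t
      exact ((hT (Xbar + t • v)).comp_hasDerivAt t (hpath t)).sub_const _
    set B : ℝ → ℝ := fun t => Z₁ * d * t + Z₂ * d ^ 2 / 2 * t ^ 2 with hBdef
    set B' : ℝ → ℝ := fun t => Z₁ * d + Z₂ * d ^ 2 * t with hB'def
    have hBderiv : ∀ t : ℝ, HasDerivAt B (B' t) t := by
      intro t
      have h1 : HasDerivAt (fun t : ℝ => Z₁ * d * t) (Z₁ * d) t := by
        simpa using (hasDerivAt_id t).const_mul (Z₁ * d)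
      have h2 : HasDerivAt (fun t : ℝ => Z₂ * d ^ 2 / 2 * t ^ 2)
          (Z₂ * d ^ 2 / 2 * (2 * t)) t := by
        simpa using (hasDerivAt_pow 2 t).const_mul (Z₂ * d ^ 2 / 2)
      have := h1.add h2
      refine this.congr_deriv ?_
      show _ = Z₁ * d + Z₂ * d ^ 2 * t
      ring
    have hbound : ∀ t ∈ Set.Ico (0:ℝ) 1, ‖f' t‖ ≤ B' t := by
      intro t ht
      have h1 : ‖f' t‖ ≤ ‖ContinuousLinearMap.id ℝ X - A.comp (DF (Xbar + t • v))‖ * ‖v‖ :=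
        ContinuousLinearMap.le_opNorm _ _
      have h2 : ‖Xbar + t • v - Xbar‖ = t * d := by
        rw [add_sub_cancel_left, norm_smul, Real.norm_eq_abs, abs_of_nonneg ht.1]
      have h3 := hDT (Xbar + t • v)
      rw [h2] at h3
      calc ‖f' t‖ ≤ (Z₁ + Z₂ * (t * d)) * d := by
            refine h1.trans ?_
            exact mul_le_mul_of_nonneg_right h3 hd0
        _ ≤ B' t := by simp [hB'def]; nlinarith [ht.1]
    have hmain : ‖f 1‖ ≤ B 1 := by
      refine image_norm_le_of_norm_deriv_right_le_deriv_boundary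
        (fun t _ => (hfderiv t).continuousAt.continuousWithinAt)
        (fun t _ => (hfderiv t).hasDerivWithinAt) ?_ hBderiv hbound
        (Set.right_mem_Icc.mpr zero_le_one)
      simp [hfdef, hBdef]
    have hfeq : f 1 = T x - T Xbar := by
      simp [hfdef, hvdef]
    have hTx : ‖T x - T Xbar‖ ≤ Z₁ * d + Z₂ * d ^ 2 / 2 := by
      rw [← hfeq]
      refine hmain.trans ?_
      simp [hBdef]
    have : ‖T x - Xbar‖ ≤ r := by
      calc ‖T x - Xbar‖ ≤ ‖T x - T Xbar‖ + ‖T Xbar - Xbar‖ := norm_sub_le_norm_sub_add_norm_sub _ _ _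
        _ ≤ (Z₁ * d + Z₂ * d ^ 2 / 2) + Y := add_le_add hTx hTX
        _ ≤ r := by nlinarith [mul_le_mul hd hd hd0 hr0]
    rw [Metric.mem_closedBall, dist_eq_norm]
    exact this
  -- fixed point theory
  set K : NNReal := ⟨Z₁ + Z₂ * r, by positivity⟩ with hKdef
  have hKlt : K < 1 := by
    rw [← NNReal.coe_lt_coe]
    exact hrZ
  have hcontr : ContractingWith K (hmaps.restrict T _ _) := by
    refine ⟨hKlt, LipschitzWith.of_dist_le_mul ?_⟩
    rintro ⟨x, hx⟩ ⟨y, hy⟩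
    simp only [Set.MapsTo.restrict, Subtype.dist_eq, Subtype.map, dist_eq_norm]
    exact hlip x hx y hy
  obtain ⟨xs, hxsmem, hxsfix, -, -⟩ :=
    hcontr.exists_fixedPoint' (Metric.isClosed_closedBall.isComplete) hmaps
      (Metric.mem_closedBall_self hr0) (edist_ne_top _ _)
  -- fixed points are exactly zeros of F
  have hfixzero : ∀ z : X, T z = z → F z = 0 := by
    intro z hz
    have hA0 : A (F z) = 0 := by
      have : z - A (F z) = z := hz
      have := sub_eq_self.mp this
      exact this
    exact hAinj (by rw [hA0, map_zero])
  have hzerofix : ∀ z : X, F z = 0 → T z = z := by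
    intro z hz
    simp [hTdef, hz]
  have hmemiff : ∀ z : X, z ∈ Metric.closedBall Xbar r ↔ ‖z - Xbar‖ ≤ r := by
    intro z; rw [Metric.mem_closedBall, dist_eq_norm]
  refine ⟨xs, ⟨hfixzero xs hxsfix, (hmemiff xs).mp hxsmem⟩, ?_⟩
  rintro y ⟨hyF, hyball⟩
  have hy : y ∈ Metric.closedBall Xbar r := (hmemiff y).mpr hyball
  have h1 := hlip y hy xs hxsmem
  have hx1 : T xs = xs := hxsfix
  have hy1 : T y = y := hzerofix y hyF
  rw [hy1, hx1] at h1
  have h2 : ‖y - xs‖ ≤ 0 := by nlinarith [norm_nonneg (y - xs)]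
  have := le_antisymm h2 (norm_nonneg _)
  rw [norm_eq_zero, sub_eq_zero] at this
  exact this
end
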